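/- Let g, P > 0 and x ∈ ℝ, let Z be a standard Gaussian random variable, and set Y := √g·x + Z. Then Var[ ln( φ₁(Y − √g·x) / φ_{√(1+gP)}(Y) ) ] = ( 4·g·x² + 2·g²·P² ) / ( 4·(1 + g·P)² ). -/

import Mathlib

open MeasureTheory ProbabilityTheory Real
open scoped ENNReal NNReal

/-- Density of the centered Gaussian with standard deviation `σ`. -/
noncomputable def gaussDensity (σ y : ℝ) : ℝ :=
  (1 / (σ * Real.sqrt (2 * Real.pi))) * Real.exp (-(y ^ 2) / (2 * σ ^ 2))

namespace VarInfoAux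

lemma intg (n : ℕ) : Integrable (fun z : ℝ => z ^ n * Real.exp (-(1/2) * z ^ 2)) := by
  have h := integrable_rpow_mul_exp_neg_mul_sq (b := 1/2) (by norm_num) (s := (n : ℝ))
    (by exact_mod_cast neg_one_lt_zero.trans_le (Nat.cast_nonneg n))
  simpa [Real.rpow_natCast] using h

lemma odd_mom (n : ℕ) (hn : Odd n) : ∫ z : ℝ, z ^ n * Real.exp (-(1/2) * z ^ 2) = 0 := by
  have h := MeasureTheory.integral_neg_eq_self
    (fun z : ℝ => z ^ n * Real.exp (-(1/2) * z ^ 2)) volume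
  simp only [hn.neg_pow, neg_sq, neg_mul] at h
  rw [integral_neg] at h
  simp only [neg_mul] at h ⊢
  linarith [h]

lemma even_mom (n : ℕ) (hn : Even n) :
    ∫ z : ℝ, z ^ n * Real.exp (-(1/2) * z ^ 2)
      = 2 * ((1/2 : ℝ) ^ (-((n : ℝ) + 1) / 2) * (1 / 2) * Real.Gamma (((n : ℝ) + 1) / 2)) := by
  have hint := intg n
  rw [← intervalIntegral.integral_Iic_add_Ioi (b := (0:ℝ)) hint.integrableOn hint.integrableOn]
  have h1 : ∫ z in Set.Iic (0:ℝ), z ^ n * Real.exp (-(1/2) * z ^ 2)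
      = ∫ z in Set.Ioi (0:ℝ), z ^ n * Real.exp (-(1/2) * z ^ 2) := by
    rw [← neg_zero, ← integral_comp_neg_Ioi]
    simp [hn.neg_pow]
  have h2 : ∫ z in Set.Ioi (0:ℝ), z ^ n * Real.exp (-(1/2) * z ^ 2)
      = (1/2 : ℝ) ^ (-((n : ℝ) + 1) / 2) * (1 / 2) * Real.Gamma (((n : ℝ) + 1) / 2) := by
    rw [← integral_rpow_mul_exp_neg_mul_rpow (p := 2) (q := (n : ℝ)) (b := 1/2) (by norm_num)
      (by exact_mod_cast neg_one_lt_zero.trans_le (Nat.cast_nonneg n)) (by norm_num)]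
    refine setIntegral_congr_fun measurableSet_Ioi (fun z hz => ?_)
    rw [Real.rpow_natCast, Real.rpow_two]
  rw [h1, h2]; ring

lemma mom2_val : ∫ z : ℝ, z ^ 2 * Real.exp (-(1/2) * z ^ 2) = Real.sqrt (2 * π) := by
  have h := even_mom 2 (by decide)
  push_cast at h
  rw [h, show (1/2 : ℝ) ^ (-(2+1 : ℝ)/2) = 2 * Real.sqrt 2 by
      rw [show (-(2+1:ℝ)/2) = -(3/2) by norm_num, Real.rpow_neg (by norm_num),
        show (1/2:ℝ) = 2⁻¹ by norm_num, Real.inv_rpow (by norm_num), inv_inv,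
        show (3/2 : ℝ) = 1 + 1/2 by norm_num, Real.rpow_add (by norm_num), Real.rpow_one,
        Real.sqrt_eq_rpow],
    show Real.Gamma ((2+1:ℝ)/2) = Real.sqrt π / 2 by
      rw [show ((2+1:ℝ)/2) = 1/2 + 1 by norm_num, Real.Gamma_add_one (by norm_num),
        Real.Gamma_one_half_eq]
      ring,
    Real.sqrt_mul (by norm_num)]
  ring

lemma mom4_val : ∫ z : ℝ, z ^ 4 * Real.exp (-(1/2) * z ^ 2) = 3 * Real.sqrt (2 * π) := by
  have h := even_mom 4 (by decide)
  push_cast at h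
  rw [h, show (1/2 : ℝ) ^ (-(4+1 : ℝ)/2) = 4 * Real.sqrt 2 by
      rw [show (-(4+1:ℝ)/2) = -(5/2) by norm_num, Real.rpow_neg (by norm_num),
        show (1/2:ℝ) = 2⁻¹ by norm_num, Real.inv_rpow (by norm_num), inv_inv,
        show (5/2 : ℝ) = 2 + 1/2 by norm_num, Real.rpow_add (by norm_num), Real.rpow_two,
        Real.sqrt_eq_rpow]
      norm_num [Real.rpow_two],
    show Real.Gamma ((4+1:ℝ)/2) = 3 * Real.sqrt π / 4 by
      rw [show ((4+1:ℝ)/2) = (1/2 + 1) + 1 by norm_num, Real.Gamma_add_one (by norm_num),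
        Real.Gamma_add_one (by norm_num), Real.Gamma_one_half_eq]
      ring,
    Real.sqrt_mul (by norm_num)]
  ring

lemma pdf_eq (z : ℝ) :
    gaussianPDFReal 0 1 z = (Real.sqrt (2 * π))⁻¹ * Real.exp (-(1/2) * z ^ 2) := by
  rw [gaussianPDFReal]
  norm_num
  left; ring

lemma gauss_integral_eq (f : ℝ → ℝ) :
    ∫ z, f z ∂(gaussianReal 0 1) = ∫ z, f z * gaussianPDFReal 0 1 z := by
  rw [gaussianReal_of_var_ne_zero 0 one_ne_zero]
  have h : (gaussianPDF 0 1) = fun z => ((gaussianPDFReal 0 1 z).toNNReal : ℝ≥0∞) := by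
    ext z; simp [gaussianPDF, ENNReal.ofReal]
  rw [h, integral_withDensity_eq_integral_smul
    (by exact (measurable_gaussianPDFReal 0 1).real_toNNReal) f]
  congr 1; ext z
  rw [NNReal.smul_def, smul_eq_mul, Real.coe_toNNReal _ (gaussianPDFReal_nonneg 0 1 z), mul_comm]

lemma gauss_integrable {f : ℝ → ℝ} (h : Integrable (fun z => f z * gaussianPDFReal 0 1 z)) :
    Integrable f (gaussianReal 0 1) := by
  rw [gaussianReal_of_var_ne_zero 0 one_ne_zero, gaussianPDF_def,
    integrable_withDensity_iff (by exact (measurable_gaussianPDFReal 0 1).ennreal_ofReal)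
    (Filter.Eventually.of_forall fun z => ENNReal.ofReal_lt_top)]
  refine h.congr (Filter.Eventually.of_forall fun z => ?_)
  simp [ENNReal.toReal_ofReal (gaussianPDFReal_nonneg 0 1 z)]

lemma mom_int (n : ℕ) : Integrable (fun z : ℝ => z ^ n) (gaussianReal 0 1) := by
  refine gauss_integrable ?_
  have h : (fun z : ℝ => z ^ n * gaussianPDFReal 0 1 z)
      = fun z => (Real.sqrt (2 * π))⁻¹ * (z ^ n * Real.exp (-(1/2) * z ^ 2)) := by
    funext z; rw [pdf_eq]; ring
  rw [h]
  exact (intg n).const_mul _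

lemma sqrt_two_pi_ne : Real.sqrt (2 * π) ≠ 0 := by
  positivity

lemma mom_val (n : ℕ) : ∫ z, z ^ n ∂(gaussianReal 0 1)
    = (Real.sqrt (2 * π))⁻¹ * ∫ z : ℝ, z ^ n * Real.exp (-(1/2) * z ^ 2) := by
  rw [gauss_integral_eq]
  rw [← integral_const_mul]
  congr 1; funext z; rw [pdf_eq]; ring

lemma mom1 : ∫ z, z ^ 1 ∂(gaussianReal 0 1) = 0 := by
  rw [mom_val, odd_mom 1 (by decide)]; ring

lemma mom2 : ∫ z, z ^ 2 ∂(gaussianReal 0 1) = 1 := by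
  rw [mom_val, mom2_val, inv_mul_cancel₀ sqrt_two_pi_ne]

lemma mom3 : ∫ z, z ^ 3 ∂(gaussianReal 0 1) = 0 := by
  rw [mom_val, odd_mom 3 (by decide)]; ring

lemma mom4 : ∫ z, z ^ 4 ∂(gaussianReal 0 1) = 3 := by
  rw [mom_val, mom4_val]
  field_simp

lemma integrable_poly4 (c0 c1 c2 c3 c4 : ℝ) :
    Integrable (fun z : ℝ => c0 + c1 * z + c2 * z ^ 2 + c3 * z ^ 3 + c4 * z ^ 4)
      (gaussianReal 0 1) := by
  have h1 : Integrable (fun z : ℝ => c1 * z ^ 1) (gaussianReal 0 1) := (mom_int 1).const_mul c1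
  simp only [pow_one] at h1
  exact ((((integrable_const c0).add h1).add ((mom_int 2).const_mul c2)).add
    ((mom_int 3).const_mul c3)).add ((mom_int 4).const_mul c4)

lemma integral_poly4 (c0 c1 c2 c3 c4 : ℝ) :
    ∫ z, (c0 + c1 * z + c2 * z ^ 2 + c3 * z ^ 3 + c4 * z ^ 4) ∂(gaussianReal 0 1)
      = c0 + c2 + 3 * c4 := by
  have h1 : Integrable (fun z : ℝ => c1 * z) (gaussianReal 0 1) := by
    have := (mom_int 1).const_mul c1
    simpa using this
  have i0 : Integrable (fun z : ℝ => c0) (gaussianReal 0 1) := integrable_const c0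
  have i01 : Integrable (fun z : ℝ => c0 + c1 * z) (gaussianReal 0 1) := i0.add h1
  have i2 : Integrable (fun z : ℝ => c2 * z ^ 2) (gaussianReal 0 1) := (mom_int 2).const_mul c2
  have i012 : Integrable (fun z : ℝ => c0 + c1 * z + c2 * z ^ 2) (gaussianReal 0 1) := i01.add i2
  have i3 : Integrable (fun z : ℝ => c3 * z ^ 3) (gaussianReal 0 1) := (mom_int 3).const_mul c3
  have i0123 : Integrable (fun z : ℝ => c0 + c1 * z + c2 * z ^ 2 + c3 * z ^ 3)
    (gaussianReal 0 1) := i012.add i3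
  have i4 : Integrable (fun z : ℝ => c4 * z ^ 4) (gaussianReal 0 1) := (mom_int 4).const_mul c4
  rw [integral_add i0123 i4, integral_add i012 i3, integral_add i01 i2, integral_add i0 h1,
    integral_const_mul, integral_const_mul, integral_const_mul, integral_const_mul, integral_const]
  have h1' : ∫ z, z ∂(gaussianReal 0 1) = 0 := by simpa using mom1
  rw [h1', mom2, mom3, mom4]
  simp
  ring

end VarInfoAux

/-- Variance of the single-letter modified information density of the Gaussian
channel `Y = √g·x + Z`, `Z ~ N(0,1)`, with reference output distribution
`N(0, 1+gP)`. -/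
theorem variance_info_density (g P x : ℝ) (hg : 0 < g) (hP : 0 < P) :
    variance
      (fun z : ℝ =>
        Real.log
          (gaussDensity 1 ((Real.sqrt g * x + z) - Real.sqrt g * x) /
            gaussDensity (Real.sqrt (1 + g * P)) (Real.sqrt g * x + z)))
      (gaussianReal 0 1) =
      (4 * g * x ^ 2 + 2 * g ^ 2 * P ^ 2) / (4 * (1 + g * P) ^ 2) := by
  have hs : (0:ℝ) < 1 + g * P := by positivity
  have hs2 : Real.sqrt (1 + g * P) ^ 2 = 1 + g * P := Real.sq_sqrt hs.le
  have hg2 : Real.sqrt g ^ 2 = g := Real.sq_sqrt hg.le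
  have hsπ : Real.sqrt (2 * Real.pi) ≠ 0 := VarInfoAux.sqrt_two_pi_ne
  have hspos : (0:ℝ) < Real.sqrt (1 + g * P) := Real.sqrt_pos.mpr hs
  have key : (fun z : ℝ =>
      Real.log
        (gaussDensity 1 ((Real.sqrt g * x + z) - Real.sqrt g * x) /
          gaussDensity (Real.sqrt (1 + g * P)) (Real.sqrt g * x + z)))
      = fun z : ℝ => (Real.log (Real.sqrt (1 + g * P)) + g * x ^ 2 / (2 * (1 + g * P)))
          + (Real.sqrt g * x / (1 + g * P)) * z
          + (1 / (2 * (1 + g * P)) - 1 / 2) * z ^ 2 := by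
    funext z
    rw [add_sub_cancel_left, gaussDensity, gaussDensity]
    have h1 : (1 / (1 * Real.sqrt (2 * Real.pi)) : ℝ) ≠ 0 := by positivity
    have h2 : (1 / (Real.sqrt (1 + g * P) * Real.sqrt (2 * Real.pi)) : ℝ) ≠ 0 := by positivity
    rw [Real.log_div (by positivity) (by positivity),
      Real.log_mul h1 (Real.exp_ne_zero _), Real.log_mul h2 (Real.exp_ne_zero _),
      Real.log_exp, Real.log_exp, one_mul, one_div, one_div,
      Real.log_inv, Real.log_inv, Real.log_mul (ne_of_gt hspos) hsπ, hs2]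
    have hexp : (Real.sqrt g * x + z) ^ 2 = g * x ^ 2 + 2 * (Real.sqrt g * x) * z + z ^ 2 := by
      have : (Real.sqrt g * x + z) ^ 2
          = Real.sqrt g ^ 2 * x ^ 2 + 2 * (Real.sqrt g * x) * z + z ^ 2 := by ring
      rw [this, hg2]
    rw [hexp]
    field_simp
    ring
  rw [key]
  set C : ℝ := Real.log (Real.sqrt (1 + g * P)) + g * x ^ 2 / (2 * (1 + g * P)) with hC
  set b : ℝ := Real.sqrt g * x / (1 + g * P) with hb
  set a : ℝ := 1 / (2 * (1 + g * P)) - 1 / 2 with ha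
  have hsq : ((fun z : ℝ => C + b * z + a * z ^ 2) ^ 2)
      = fun z : ℝ => C ^ 2 + (2 * C * b) * z + (b ^ 2 + 2 * C * a) * z ^ 2
          + (2 * a * b) * z ^ 3 + a ^ 2 * z ^ 4 := by
    funext z
    simp only [Pi.pow_apply]
    ring
  have hmem : MeasureTheory.MemLp (fun z : ℝ => C + b * z + a * z ^ 2) 2 (gaussianReal 0 1) := by
    rw [MeasureTheory.memLp_two_iff_integrable_sq
      (by apply Continuous.aestronglyMeasurable; continuity : AEStronglyMeasurable (fun z : ℝ => C + b * z + a * z ^ 2) (gaussianReal 0 1))]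
    have heq : (fun z : ℝ => (C + b * z + a * z ^ 2) ^ 2)
        = fun z : ℝ => C ^ 2 + (2 * C * b) * z + (b ^ 2 + 2 * C * a) * z ^ 2
            + (2 * a * b) * z ^ 3 + a ^ 2 * z ^ 4 := by
      funext z; ring
    rw [heq]
    exact VarInfoAux.integrable_poly4 _ _ _ _ _
  rw [ProbabilityTheory.variance_eq_sub hmem, hsq, VarInfoAux.integral_poly4]
  have hEX : ∫ z, (C + b * z + a * z ^ 2) ∂(gaussianReal 0 1) = C + a := by
    have heq : (fun z : ℝ => C + b * z + a * z ^ 2)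
        = fun z : ℝ => C + b * z + a * z ^ 2 + 0 * z ^ 3 + 0 * z ^ 4 := by
      funext z; ring
    rw [heq, VarInfoAux.integral_poly4]
    ring
  rw [hEX]
  have hexpand : C ^ 2 + (b ^ 2 + 2 * C * a) + 3 * a ^ 2 - (C + a) ^ 2
      = b ^ 2 + 2 * a ^ 2 := by ring
  rw [hexpand, hb, ha, div_pow, mul_pow, hg2]
  have hne : ((1:ℝ) + g * P) ≠ 0 := ne_of_gt hs
  field_simp
  ring
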